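/- There exists a prediction space in which the predictive distribution F takes only two values, both continuous strictly increasing CDFs on a shared support interval, such that F is simultaneously CEP calibrated, quantile calibrated, and threshold calibrated, but fails to be auto-calibrated. -/

import Mathlib

open MeasureTheory ProbabilityTheory

noncomputable section

/-- The cumulative distribution function of a measure `G` on `ℝ`, evaluated at `y`. -/
def cdfAt (G : Measure ℝ) (y : ℝ) : ℝ := (G (Set.Iic y)).toReal

/-- The left limit `G(y−)` of the CDF of `G` at `y`. -/
def cdfLt (G : Measure ℝ) (y : ℝ) : ℝ := (G (Set.Iio y)).toReal

/-- The lower `α`-quantile `q_α^-(G) = inf {x : G(x) ≥ α}`. -/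
def lowerQuantile (G : Measure ℝ) (α : ℝ) : ℝ := sInf {x : ℝ | α ≤ cdfAt G x}

/-- The upper `α`-quantile `q_α^+(G) = sup {x : G(x−) ≤ α}`. -/
def upperQuantile (G : Measure ℝ) (α : ℝ) : ℝ := sSup {x : ℝ | cdfLt G x ≤ α}

variable {Ω : Type*} [MeasurableSpace Ω]

/-- The (randomized) probability integral transform `Z_F = F(Y−) + U (F(Y) − F(Y−))`. -/
def PIT (F : Ω → Measure ℝ) (Y U : Ω → ℝ) (ω : Ω) : ℝ :=
  cdfLt (F ω) (Y ω) + U ω * (cdfAt (F ω) (Y ω) - cdfLt (F ω) (Y ω))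

/-- The uniform distribution on `[0,1]`. -/
def unif01 : Measure ℝ := volume.restrict (Set.Icc (0:ℝ) 1)

/-- A prediction space: a probability space carrying a random probability measure `F` on `ℝ`
(the predictive distribution), an outcome `Y`, and a uniform random variable `U` that is
independent of the σ-algebra generated by `F` and `Y`. -/
structure IsPredictionSpace (μ : Measure Ω) (F : Ω → Measure ℝ) (Y U : Ω → ℝ) : Prop where
  isProb : IsProbabilityMeasure μ
  probF : ∀ ω, IsProbabilityMeasure (F ω)
  measF : Measurable F
  measY : Measurable Y
  measU : Measurable U
  unifU : μ.map U = unif01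
  indepU : Indep (MeasurableSpace.comap U inferInstance)
    (MeasurableSpace.comap F inferInstance ⊔ MeasurableSpace.comap Y inferInstance) μ

/-- `F` is auto-calibrated: `F(y) = Q(Y ≤ y | σ(F))` a.s. for every `y`. -/
def AutoCalibrated (μ : Measure Ω) (F : Ω → Measure ℝ) (Y : Ω → ℝ) : Prop :=
  ∀ y : ℝ, (fun ω => cdfAt (F ω) y)
    =ᵐ[μ] μ[Set.indicator {ω | Y ω ≤ y} (fun _ => (1:ℝ)) | MeasurableSpace.comap F inferInstance]

/-- `F` is probabilistically calibrated: the PIT is uniform on `[0,1]`. -/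
def ProbCalibrated (μ : Measure Ω) (F : Ω → Measure ℝ) (Y U : Ω → ℝ) : Prop :=
  μ.map (PIT F Y U) = unif01

/-- `F` is marginally calibrated: `E[F(y)] = Q(Y ≤ y)` for every `y`. -/
def MargCalibrated (μ : Measure Ω) (F : Ω → Measure ℝ) (Y : Ω → ℝ) : Prop :=
  ∀ y : ℝ, ∫ ω, cdfAt (F ω) y ∂μ = (μ {ω | Y ω ≤ y}).toReal

/-- `F` is CEP calibrated: `Q(Z_F ≤ α | q_α^-(F)) = α` a.s. for every `α ∈ (0,1)`. -/
def CEPCalibrated (μ : Measure Ω) (F : Ω → Measure ℝ) (Y U : Ω → ℝ) : Prop :=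
  ∀ α ∈ Set.Ioo (0:ℝ) 1,
    μ[Set.indicator {ω | PIT F Y U ω ≤ α} (fun _ => (1:ℝ)) |
      MeasurableSpace.comap (fun ω => lowerQuantile (F ω) α) inferInstance]
      =ᵐ[μ] fun _ => α

/-- `F` is threshold calibrated: `Q(Y ≤ t | F(t)) = F(t)` a.s. for every `t`. -/
def ThreshCalibrated (μ : Measure Ω) (F : Ω → Measure ℝ) (Y : Ω → ℝ) : Prop :=
  ∀ t : ℝ,
    μ[Set.indicator {ω | Y ω ≤ t} (fun _ => (1:ℝ)) |
      MeasurableSpace.comap (fun ω => cdfAt (F ω) t) inferInstance]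
      =ᵐ[μ] fun ω => cdfAt (F ω) t

/-- An identification function: measurable, increasing and left-continuous in its
first argument. -/
structure IsIdentificationFunction (V : ℝ → ℝ → ℝ) : Prop where
  meas : Measurable (Function.uncurry V)
  mono : ∀ y : ℝ, Monotone fun x => V x y
  leftCont : ∀ y x : ℝ, ContinuousWithinAt (fun x => V x y) (Set.Iic x) x

/-- Lower bound `T^-(G) = sup {x : ∫ V(x,y) dG(y) < 0}` of the functional induced by `V`. -/
def Tminus (V : ℝ → ℝ → ℝ) (G : Measure ℝ) : ℝ := sSup {x : ℝ | ∫ y, V x y ∂G < 0}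

/-- Upper bound `T^+(G) = inf {x : ∫ V(x,y) dG(y) > 0}` of the functional induced by `V`. -/
def Tplus (V : ℝ → ℝ → ℝ) (G : Measure ℝ) : ℝ := sInf {x : ℝ | 0 < ∫ y, V x y ∂G}

/-- `V` is of prediction error form `V(x,y) = v(x−y)`. -/
def PredErrorForm (V : ℝ → ℝ → ℝ) : Prop :=
  ∃ v : ℝ → ℝ, Monotone v ∧ (∀ x : ℝ, ContinuousWithinAt v (Set.Iic x) x) ∧
    (∃ r : ℝ, 0 < r ∧ v (-r) < 0 ∧ 0 < v r) ∧ ∀ x y : ℝ, V x y = v (x - y)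

/-- `V` is of the form `V(x,y) = x − T(δ_y)` for a singleton-valued functional `T`. -/
def DiracSingletonForm (V : ℝ → ℝ → ℝ) : Prop :=
  (∀ y : ℝ, Tminus V (Measure.dirac y) = Tplus V (Measure.dirac y)) ∧
  ∀ x y : ℝ, V x y = x - Tminus V (Measure.dirac y)

/-- Assumption (V): `V` induces the functional on a convex class `𝓕₀ ⊇ 𝓕` of probability
measures containing all Dirac measures, and `V` is of prediction error form or of the
form `V(x,y) = x − T(δ_y)` for a singleton-valued `T`. -/
structure AssumptionV (V : ℝ → ℝ → ℝ) (𝓕 : Set (Measure ℝ)) : Prop where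
  inducing : ∃ 𝓕₀ : Set (Measure ℝ), 𝓕 ⊆ 𝓕₀ ∧ (∀ G ∈ 𝓕₀, IsProbabilityMeasure G) ∧
    (∀ y : ℝ, Measure.dirac y ∈ 𝓕₀) ∧
    (∀ G₁ ∈ 𝓕₀, ∀ G₂ ∈ 𝓕₀, ∀ p : ℝ, 0 ≤ p → p ≤ 1 →
      ENNReal.ofReal p • G₁ + ENNReal.ofReal (1 - p) • G₂ ∈ 𝓕₀) ∧
    ∀ G ∈ 𝓕₀, ∀ x : ℝ, Integrable (fun y => V x y) G
  form : PredErrorForm V ∨ DiracSingletonForm V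

/-- The pair `(T^-(F), T^+(F))` of the interval-valued functional applied to the
random predictive distribution. -/
def TpairOf (V : ℝ → ℝ → ℝ) (F : Ω → Measure ℝ) (ω : Ω) : ℝ × ℝ :=
  (Tminus V (F ω), Tplus V (F ω))

/-- Conditional `T`-calibration of the predictive distribution `F`:
`T(L(Y | T(F))) = T(F)` almost surely. -/
def CondTCalibrated (μ : Measure Ω) [IsFiniteMeasure μ] (V : ℝ → ℝ → ℝ)
    (F : Ω → Measure ℝ) (Y : Ω → ℝ) : Prop :=
  ∀ᵐ ω ∂μ,
    Tminus V (condDistrib Y (TpairOf V F) μ (TpairOf V F ω)) = Tminus V (F ω) ∧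
    Tplus V (condDistrib Y (TpairOf V F) μ (TpairOf V F ω)) = Tplus V (F ω)

/-- Unconditional `T`-calibration of the predictive distribution `F`. -/
def UncondTCalibrated (μ : Measure Ω) (V : ℝ → ℝ → ℝ)
    (F : Ω → Measure ℝ) (Y : Ω → ℝ) : Prop :=
  ∀ ε : ℝ, 0 < ε →
    (∫ ω, V (Tplus V (F ω) - ε) (Y ω) ∂μ) ≤ 0 ∧
    0 ≤ ∫ ω, V (Tminus V (F ω) + ε) (Y ω) ∂μ

/-- Unconditional `T`-calibration of a single-valued point forecast `X`. -/
def UncondCalibratedPt (μ : Measure Ω) (V : ℝ → ℝ → ℝ) (X Y : Ω → ℝ) : Prop :=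
  ∀ ε : ℝ, 0 < ε →
    (∫ ω, V (X ω - ε) (Y ω) ∂μ) ≤ 0 ∧ 0 ≤ ∫ ω, V (X ω + ε) (Y ω) ∂μ

/-- The sets defining `T^-(G)` and `T^+(G)` are nonempty and bounded, so that the induced
functional is well defined and finite at `G`. -/
def TWellDefined (V : ℝ → ℝ → ℝ) (G : Measure ℝ) : Prop :=
  {x : ℝ | ∫ y, V x y ∂G < 0}.Nonempty ∧ BddAbove {x : ℝ | ∫ y, V x y ∂G < 0} ∧
  {x : ℝ | 0 < ∫ y, V x y ∂G}.Nonempty ∧ BddBelow {x : ℝ | 0 < ∫ y, V x y ∂G}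

/-- The elementary loss `S_η(x,y) = (1{η ≤ x} − 1{η ≤ y}) V(η,y)`. -/
def elemLoss (V : ℝ → ℝ → ℝ) (η x y : ℝ) : ℝ :=
  ((if η ≤ x then (1:ℝ) else 0) - if η ≤ y then (1:ℝ) else 0) * V η y

/-- `S` has mixture (Choquet) form with respect to the identification function `V`. -/
def MixtureForm (V S : ℝ → ℝ → ℝ) : Prop :=
  ∃ H : Measure ℝ, IsLocallyFiniteMeasure H ∧
    ∀ x y : ℝ, S x y = ∫ η, elemLoss V η x y ∂H

/-- `S` is a canonical loss for the functional induced by `V`. -/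
def IsCanonicalLoss (V S : ℝ → ℝ → ℝ) : Prop :=
  (∀ x y : ℝ, 0 ≤ S x y) ∧
  ∃ a : ℝ, 0 < a ∧ ∃ b : ℝ → ℝ, Measurable b ∧
    ∀ x y : ℝ, S x y = a * (∫ η, elemLoss V η x y) + b y

/-- `S` is a consistent scoring function for the functional induced by `V` on the class `𝓕`. -/
def ConsistentFor (S V : ℝ → ℝ → ℝ) (𝓕 : Set (Measure ℝ)) : Prop :=
  ∀ G ∈ 𝓕, ∀ t ∈ Set.Icc (Tminus V G) (Tplus V G), ∀ x : ℝ,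
    ∫ y, S t y ∂G ≤ ∫ y, S x y ∂G

/-- `S` is a strictly consistent scoring function for the functional induced by `V` on `𝓕`. -/
def StrictlyConsistentFor (S V : ℝ → ℝ → ℝ) (𝓕 : Set (Measure ℝ)) : Prop :=
  ConsistentFor S V 𝓕 ∧
  ∀ G ∈ 𝓕, ∀ t ∈ Set.Icc (Tminus V G) (Tplus V G), ∀ x : ℝ,
    x ∉ Set.Icc (Tminus V G) (Tplus V G) → ∫ y, S t y ∂G < ∫ y, S x y ∂G

/-- The empirical distribution of the outcomes `y i`, `i ∈ s`. -/
def empOn {n : ℕ} (y : Fin n → ℝ) (s : Finset (Fin n)) : Measure ℝ :=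
  (s.card : ENNReal)⁻¹ • ∑ i ∈ s, Measure.dirac (y i)

/-- A locally bounded real function of a real variable. -/
def LocallyBdd (f : ℝ → ℝ) : Prop :=
  ∀ η₀ : ℝ, ∃ ε : ℝ, 0 < ε ∧ ∃ C : ℝ, ∀ η : ℝ, |η - η₀| < ε → |f η| ≤ C

/-- All CDFs in the class `𝓕` are continuous and strictly increasing on a shared
support interval. -/
def CSI (𝓕 : Set (Measure ℝ)) : Prop :=
  ∃ S : Set ℝ, S.Nonempty ∧ S.OrdConnected ∧ ∀ G ∈ 𝓕,
    Continuous (cdfAt G) ∧ StrictMonoOn (cdfAt G) S ∧ G Sᶜ = 0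

/-- The conditioning variable for quantile calibration at level `α`: the interval of
`α`-quantiles, represented by its endpoints. -/
def qPairOf (F : Ω → Measure ℝ) (α : ℝ) (ω : Ω) : ℝ × ℝ :=
  (lowerQuantile (F ω) α, upperQuantile (F ω) α)

/-- `F` is quantile calibrated: for every `α ∈ (0,1)`,
`q_α(L(Y | q_α(F))) = q_α(F)` almost surely. -/
def QuantileCalibrated (μ : Measure Ω) [IsFiniteMeasure μ]
    (F : Ω → Measure ℝ) (Y : Ω → ℝ) : Prop :=
  ∀ α ∈ Set.Ioo (0:ℝ) 1, ∀ᵐ ω ∂μ,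
    lowerQuantile (condDistrib Y (qPairOf F α) μ (qPairOf F α ω)) α
      = lowerQuantile (F ω) α ∧
    upperQuantile (condDistrib Y (qPairOf F α) μ (qPairOf F α ω)) α
      = upperQuantile (F ω) α



/-! ## Auxiliary development for the counterexample -/

section AuxHelpers

open Set
open scoped ENNReal

/-! ### Piecewise linear ramps -/

def ramp (a b x : ℝ) : ℝ := max (min x b - a) 0

lemma ramp_of_le {a b x : ℝ} (h : x ≤ a) : ramp a b x = 0 := by
  have : min x b ≤ a := le_trans (min_le_left _ _) h
  simp [ramp, max_eq_right, sub_nonpos.2 this]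

lemma ramp_of_ge {a b x : ℝ} (hab : a ≤ b) (h : b ≤ x) : ramp a b x = b - a := by
  rw [ramp, min_eq_right h, max_eq_left (by linarith)]

lemma ramp_of_mem {a b x : ℝ} (h1 : a ≤ x) (h2 : x ≤ b) : ramp a b x = x - a := by
  rw [ramp, min_eq_left h2, max_eq_left (by linarith)]

lemma ramp_mono (a b : ℝ) : Monotone (ramp a b) := fun x y h => by
  apply max_le_max _ le_rfl
  have : min x b ≤ min y b := min_le_min h le_rfl
  linarith

lemma ramp_continuous (a b : ℝ) : Continuous (ramp a b) :=
  ((continuous_id.min continuous_const).sub continuous_const).max continuous_const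

lemma ramp_split {a c b : ℝ} (h1 : a ≤ c) (h2 : c ≤ b) (x : ℝ) :
    ramp a c x + ramp c b x = ramp a b x := by
  rcases le_total x c with h | h
  · rw [ramp_of_le h, add_zero, ramp, ramp, min_eq_left h, min_eq_left (h.trans h2)]
  · rw [ramp_of_ge h1 h]
    have hcb : c ≤ min x b := le_min h h2
    rw [ramp, max_eq_left (by linarith), ramp, max_eq_left (by linarith)]
    ring

/-! ### Basic building-block measures -/

def pieceM (r a b : ℝ) : Measure ℝ := ENNReal.ofReal r • volume.restrict (Set.Ioc a b)

lemma pieceM_apply (r a b : ℝ) {s : Set ℝ} (hs : MeasurableSet s) :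
    pieceM r a b s = ENNReal.ofReal r * volume (s ∩ Set.Ioc a b) := by
  rw [pieceM, Measure.smul_apply, Measure.restrict_apply hs, smul_eq_mul]

lemma pieceM_Iic {r : ℝ} (hr : 0 ≤ r) {a b : ℝ} (x : ℝ) :
    pieceM r a b (Set.Iic x) = ENNReal.ofReal (r * ramp a b x) := by
  rw [pieceM_apply _ _ _ measurableSet_Iic]
  have : Set.Iic x ∩ Set.Ioc a b = Set.Ioc a (min x b) := by
    ext y; simp only [Set.mem_inter_iff, Set.mem_Iic, Set.mem_Ioc, le_min_iff]
    tauto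
  rw [this, Real.volume_Ioc, ← ENNReal.ofReal_mul hr]
  rcases le_total (min x b) a with h | h
  · rw [ramp, max_eq_right (by linarith)]
    rw [ENNReal.ofReal_eq_zero.2 (by nlinarith), ENNReal.ofReal_eq_zero.2 (by nlinarith)]
  · rw [ramp, max_eq_left (by linarith)]

lemma pieceM_Iic_toReal {r : ℝ} (hr : 0 ≤ r) {a b : ℝ} (x : ℝ) :
    (pieceM r a b (Set.Iic x)).toReal = r * ramp a b x := by
  rw [pieceM_Iic hr, ENNReal.toReal_ofReal]
  have := le_max_right (min x b - a) (0:ℝ)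
  exact mul_nonneg hr this

lemma pieceM_singleton (r a b y : ℝ) : pieceM r a b {y} = 0 := by
  rw [pieceM_apply _ _ _ (measurableSet_singleton y)]
  have : volume ({y} ∩ Set.Ioc a b) = 0 :=
    measure_mono_null (Set.inter_subset_left) (Real.volume_singleton)
  rw [this, mul_zero]

lemma pieceM_univ (r a b : ℝ) :
    pieceM r a b Set.univ = ENNReal.ofReal r * ENNReal.ofReal (b - a) := by
  rw [pieceM_apply _ _ _ MeasurableSet.univ, Set.univ_inter, Real.volume_Ioc]

lemma pieceM_ne_top {r a b : ℝ} (s : Set ℝ) (hs : MeasurableSet s) : pieceM r a b s ≠ ⊤ := by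
  rw [pieceM_apply _ _ _ hs]
  exact ENNReal.mul_ne_top ENNReal.ofReal_ne_top
    (ne_top_of_le_ne_top (by rw [Real.volume_Ioc]; exact ENNReal.ofReal_ne_top)
      (measure_mono Set.inter_subset_right))

lemma pieceM_compl (r a b : ℝ) (h : Set.Ioc a b ⊆ Set.Icc 0 1) :
    pieceM r a b (Set.Icc (0:ℝ) 1)ᶜ = 0 := by
  rw [pieceM_apply _ _ _ measurableSet_Icc.compl]
  have : (Set.Icc (0:ℝ) 1)ᶜ ∩ Set.Ioc a b = ∅ := by
    rw [Set.eq_empty_iff_forall_notMem]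
    intro y hy
    exact hy.1 (h hy.2)
  rw [this]; simp

/-! ### The four distributions -/

def G1 : Measure ℝ := pieceM 1 0 1
def G2 : Measure ℝ := pieceM (1/2) 0 1 + pieceM (1/2) 0 (1/2) + pieceM 1 (3/4) 1
def Hm1 : Measure ℝ := pieceM (1/2) 0 1 + pieceM 1 (1/4) (1/2) + pieceM (1/2) (1/2) 1
def Hm2 : Measure ℝ := pieceM (1/2) 0 1 + pieceM 1 0 (1/4) + pieceM 1 (3/4) 1

def g1 (x : ℝ) : ℝ := ramp 0 1 x
def g2 (x : ℝ) : ℝ := (1/2) * ramp 0 1 x + (1/2) * ramp 0 (1/2) x + ramp (3/4) 1 x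
def h1 (x : ℝ) : ℝ := (1/2) * ramp 0 1 x + ramp (1/4) (1/2) x + (1/2) * ramp (1/2) 1 x
def h2 (x : ℝ) : ℝ := (1/2) * ramp 0 1 x + ramp 0 (1/4) x + ramp (3/4) 1 x

lemma cdfAt_G1 (x : ℝ) : cdfAt G1 x = g1 x := by
  rw [cdfAt, G1, pieceM_Iic_toReal (by norm_num), g1, one_mul]

lemma toReal_add3 {a b c : ℝ≥0∞} (ha : a ≠ ⊤) (hb : b ≠ ⊤) (hc : c ≠ ⊤) :
    (a + b + c).toReal = a.toReal + b.toReal + c.toReal := by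
  rw [ENNReal.toReal_add (by finiteness) hc, ENNReal.toReal_add ha hb]

lemma cdfAt_G2 (x : ℝ) : cdfAt G2 x = g2 x := by
  rw [cdfAt, G2, Measure.add_apply, Measure.add_apply,
    toReal_add3 (pieceM_ne_top _ measurableSet_Iic) (pieceM_ne_top _ measurableSet_Iic)
      (pieceM_ne_top _ measurableSet_Iic),
    pieceM_Iic_toReal (by norm_num), pieceM_Iic_toReal (by norm_num),
    pieceM_Iic_toReal (by norm_num), g2, one_mul]

lemma cdfAt_Hm1 (x : ℝ) : cdfAt Hm1 x = h1 x := by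
  rw [cdfAt, Hm1, Measure.add_apply, Measure.add_apply,
    toReal_add3 (pieceM_ne_top _ measurableSet_Iic) (pieceM_ne_top _ measurableSet_Iic)
      (pieceM_ne_top _ measurableSet_Iic),
    pieceM_Iic_toReal (by norm_num), pieceM_Iic_toReal (by norm_num),
    pieceM_Iic_toReal (by norm_num), h1, one_mul]

lemma cdfAt_Hm2 (x : ℝ) : cdfAt Hm2 x = h2 x := by
  rw [cdfAt, Hm2, Measure.add_apply, Measure.add_apply,
    toReal_add3 (pieceM_ne_top _ measurableSet_Iic) (pieceM_ne_top _ measurableSet_Iic)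
      (pieceM_ne_top _ measurableSet_Iic),
    pieceM_Iic_toReal (by norm_num), pieceM_Iic_toReal (by norm_num),
    pieceM_Iic_toReal (by norm_num), h2]
  ring

lemma G1_singleton (y : ℝ) : G1 {y} = 0 := pieceM_singleton _ _ _ _
lemma G2_singleton (y : ℝ) : G2 {y} = 0 := by
  rw [G2, Measure.add_apply, Measure.add_apply, pieceM_singleton, pieceM_singleton,
    pieceM_singleton]; simp
lemma Hm1_singleton (y : ℝ) : Hm1 {y} = 0 := by
  rw [Hm1, Measure.add_apply, Measure.add_apply, pieceM_singleton, pieceM_singleton,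
    pieceM_singleton]; simp
lemma Hm2_singleton (y : ℝ) : Hm2 {y} = 0 := by
  rw [Hm2, Measure.add_apply, Measure.add_apply, pieceM_singleton, pieceM_singleton,
    pieceM_singleton]; simp

instance G1_prob : IsProbabilityMeasure G1 := by
  constructor
  rw [G1, pieceM_univ]
  norm_num

instance G2_prob : IsProbabilityMeasure G2 := by
  constructor
  rw [G2, Measure.add_apply, Measure.add_apply, pieceM_univ, pieceM_univ, pieceM_univ,
    ← ENNReal.ofReal_mul (by norm_num), ← ENNReal.ofReal_mul (by norm_num),
    ← ENNReal.ofReal_mul (by norm_num), ← ENNReal.ofReal_add (by norm_num) (by norm_num),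
    ← ENNReal.ofReal_add (by norm_num) (by norm_num)]
  norm_num

instance Hm1_prob : IsProbabilityMeasure Hm1 := by
  constructor
  rw [Hm1, Measure.add_apply, Measure.add_apply, pieceM_univ, pieceM_univ, pieceM_univ,
    ← ENNReal.ofReal_mul (by norm_num), ← ENNReal.ofReal_mul (by norm_num),
    ← ENNReal.ofReal_mul (by norm_num), ← ENNReal.ofReal_add (by norm_num) (by norm_num),
    ← ENNReal.ofReal_add (by norm_num) (by norm_num)]
  norm_num

instance Hm2_prob : IsProbabilityMeasure Hm2 := by
  constructor
  rw [Hm2, Measure.add_apply, Measure.add_apply, pieceM_univ, pieceM_univ, pieceM_univ,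
    ← ENNReal.ofReal_mul (by norm_num), ← ENNReal.ofReal_mul (by norm_num),
    ← ENNReal.ofReal_mul (by norm_num), ← ENNReal.ofReal_add (by norm_num) (by norm_num),
    ← ENNReal.ofReal_add (by norm_num) (by norm_num)]
  norm_num

/-! ### Formula facts -/

def mcdf (x : ℝ) : ℝ := (1/2) * (h1 x + h2 x)

lemma g1_mono : Monotone g1 := ramp_mono 0 1
lemma g2_mono : Monotone g2 :=
  (((ramp_mono 0 1).const_mul (by norm_num : (0:ℝ) ≤ 1/2)).add
    ((ramp_mono 0 (1/2)).const_mul (by norm_num : (0:ℝ) ≤ 1/2))).add (ramp_mono (3/4) 1)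
lemma h1_mono : Monotone h1 :=
  (((ramp_mono 0 1).const_mul (by norm_num : (0:ℝ) ≤ 1/2)).add
    (ramp_mono (1/4) (1/2))).add ((ramp_mono (1/2) 1).const_mul (by norm_num : (0:ℝ) ≤ 1/2))
lemma h2_mono : Monotone h2 :=
  (((ramp_mono 0 1).const_mul (by norm_num : (0:ℝ) ≤ 1/2)).add
    (ramp_mono 0 (1/4))).add (ramp_mono (3/4) 1)
lemma mcdf_mono : Monotone mcdf :=
  (h1_mono.add h2_mono).const_mul (by norm_num : (0:ℝ) ≤ 1/2)

lemma strictMonoOn_base {f m : ℝ → ℝ} (c : ℝ) (hc : 0 < c) (hm : Monotone m)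
    (hf : ∀ x ∈ Icc (0:ℝ) 1, f x = c * x + m x) : StrictMonoOn f (Icc 0 1) := by
  intro x hx y hy hxy
  rw [hf x hx, hf y hy]
  have := hm hxy.le
  nlinarith

lemma ramp01_id {x : ℝ} (hx : x ∈ Icc (0:ℝ) 1) : ramp 0 1 x = x := by
  rw [ramp_of_mem hx.1 hx.2, sub_zero]

lemma g1_strict : StrictMonoOn g1 (Icc 0 1) :=
  strictMonoOn_base (m := fun _ => (0:ℝ)) 1 one_pos monotone_const
    (fun x hx => by rw [g1, ramp01_id hx]; ring)
lemma g2_strict : StrictMonoOn g2 (Icc 0 1) :=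
  strictMonoOn_base (1/2) (by norm_num)
    (((ramp_mono 0 (1/2)).const_mul (by norm_num : (0:ℝ) ≤ 1/2)).add (ramp_mono (3/4) 1))
    (fun x hx => by rw [g2, ramp01_id hx]; ring)
lemma h1_strict : StrictMonoOn h1 (Icc 0 1) :=
  strictMonoOn_base (1/2) (by norm_num)
    ((ramp_mono (1/4) (1/2)).add ((ramp_mono (1/2) 1).const_mul (by norm_num : (0:ℝ) ≤ 1/2)))
    (fun x hx => by rw [h1, ramp01_id hx]; ring)
lemma h2_strict : StrictMonoOn h2 (Icc 0 1) :=
  strictMonoOn_base (1/2) (by norm_num)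
    ((ramp_mono 0 (1/4)).add (ramp_mono (3/4) 1))
    (fun x hx => by rw [h2, ramp01_id hx]; ring)
lemma mcdf_strict : StrictMonoOn mcdf (Icc 0 1) :=
  strictMonoOn_base (1/2) (by norm_num)
    ((((ramp_mono (1/4) (1/2)).add ((ramp_mono (1/2) 1).const_mul
        (by norm_num : (0:ℝ) ≤ 1/2))).add ((ramp_mono 0 (1/4)).add
        (ramp_mono (3/4) 1))).const_mul (by norm_num : (0:ℝ) ≤ 1/2))
    (fun x hx => by
      rw [mcdf, h1, h2, ramp01_id hx]; ring)

lemma g1_zero : g1 0 = 0 := by rw [g1, ramp_of_le le_rfl]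
lemma g2_zero : g2 0 = 0 := by
  rw [g2, ramp_of_le le_rfl, ramp_of_le le_rfl, ramp_of_le (by norm_num)]; ring
lemma h1_zero : h1 0 = 0 := by
  rw [h1, ramp_of_le le_rfl, ramp_of_le (by norm_num), ramp_of_le (by norm_num)]; ring
lemma h2_zero : h2 0 = 0 := by
  rw [h2, ramp_of_le le_rfl, ramp_of_le le_rfl, ramp_of_le (by norm_num)]; ring
lemma mcdf_zero : mcdf 0 = 0 := by rw [mcdf, h1_zero, h2_zero]; ring

lemma g1_one : g1 1 = 1 := by rw [g1, ramp_of_ge zero_le_one le_rfl]; norm_num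
lemma g2_one : g2 1 = 1 := by
  rw [g2, ramp_of_ge zero_le_one le_rfl, ramp_of_ge (by norm_num) (by norm_num),
    ramp_of_ge (by norm_num) le_rfl]; norm_num
lemma h1_one : h1 1 = 1 := by
  rw [h1, ramp_of_ge zero_le_one le_rfl, ramp_of_ge (by norm_num) (by norm_num),
    ramp_of_ge (by norm_num) le_rfl]; norm_num
lemma h2_one : h2 1 = 1 := by
  rw [h2, ramp_of_ge zero_le_one le_rfl, ramp_of_ge (by norm_num) (by norm_num),
    ramp_of_ge (by norm_num) le_rfl]; norm_num
lemma mcdf_one : mcdf 1 = 1 := by rw [mcdf, h1_one, h2_one]; norm_num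

lemma sum_identity (x : ℝ) : h1 x + h2 x = g1 x + g2 x := by
  have s1 := ramp_split (by norm_num : (0:ℝ) ≤ 1/4) (by norm_num : (1/4:ℝ) ≤ 1/2) x
  have s2 := ramp_split (by norm_num : (0:ℝ) ≤ 1/2) (by norm_num : (1/2:ℝ) ≤ 1) x
  rw [h1, h2, g1, g2]
  linarith

lemma g1_eval {x : ℝ} (h0 : 0 ≤ x) (h1 : x ≤ 1) : g1 x = x := ramp01_id ⟨h0, h1⟩

lemma g2_eval_lo {x : ℝ} (h0 : 0 ≤ x) (hx : x ≤ 1/2) : g2 x = x := by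
  rw [g2, ramp01_id ⟨h0, by linarith⟩, ramp_of_mem h0 hx, ramp_of_le (by linarith)]
  ring

lemma g2_eval_mid {x : ℝ} (h0 : 1/2 ≤ x) (hx : x ≤ 3/4) : g2 x = x/2 + 1/4 := by
  rw [g2, ramp01_id ⟨by linarith, by linarith⟩, ramp_of_ge (by norm_num) h0,
    ramp_of_le hx]
  ring

lemma g2_eval_hi {x : ℝ} (h0 : 3/4 ≤ x) (hx : x ≤ 1) : g2 x = 3*x/2 - 1/2 := by
  rw [g2, ramp01_id ⟨by linarith, hx⟩, ramp_of_ge (by norm_num) (by linarith),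
    ramp_of_mem h0 hx]
  ring

lemma h1_eval_hi {x : ℝ} (h0 : 1/2 ≤ x) (hx : x ≤ 1) : h1 x = x := by
  rw [h1, ramp01_id ⟨by linarith, hx⟩, ramp_of_ge (by norm_num) h0,
    ramp_of_mem h0 hx]
  ring

lemma h1_eval_quarter : h1 (1/4) = 1/8 := by
  rw [h1, ramp_of_mem (a := 0) (b := 1) (by norm_num) (by norm_num), ramp_of_le le_rfl,
    ramp_of_le (by norm_num)]
  norm_num

lemma h2_eq_g2_hi {x : ℝ} (h0 : 1/2 ≤ x) : h2 x = g2 x := by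
  have hs := sum_identity x
  have e1 : h1 x = g1 x := by
    rcases le_total x 1 with h | h
    · rw [h1_eval_hi h0 h, g1_eval (by linarith) h]
    · rw [h1, g1, ramp_of_ge zero_le_one h,
        ramp_of_ge (by norm_num) (by linarith), ramp_of_ge (by norm_num) (by linarith)]
      ring
  linarith

lemma g1_eq_g2_lo {x : ℝ} (hx : x ≤ 1/2) : g1 x = g2 x := by
  rcases le_total x 0 with h | h
  · rw [g1, g2, ramp_of_le h, ramp_of_le h, ramp_of_le (by linarith)]; ring
  · rw [g1_eval h (by linarith), g2_eval_lo h hx]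

lemma g1_eq_g2_hi' {x : ℝ} (hx : 1 ≤ x) : g1 x = g2 x := by
  rw [g1, g2, ramp_of_ge zero_le_one hx,
    ramp_of_ge (by norm_num) (by linarith), ramp_of_ge (by norm_num) (by linarith)]
  ring

lemma h1_eq_g1_or : ∀ x : ℝ, h1 x = g1 x ∨ g1 x = g2 x := by
  intro x
  rcases le_total x (1/2) with h | h
  · exact Or.inr (g1_eq_g2_lo h)
  rcases le_total x 1 with h' | h'
  · exact Or.inl (by rw [h1_eval_hi h h', g1_eval (by linarith) h'])
  · exact Or.inr (g1_eq_g2_hi' h')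

lemma h2_eq_g2_or : ∀ x : ℝ, h2 x = g2 x ∨ g1 x = g2 x := by
  intro x
  rcases le_total x (1/2) with h | h
  · exact Or.inr (g1_eq_g2_lo h)
  · exact Or.inl (h2_eq_g2_hi h)

/-! ### Quantile computations -/

lemma quantile_sets {G : Measure ℝ} {f : ℝ → ℝ} (hf : ∀ x, cdfAt G x = f x)
    (hmono : Monotone f) (hstrict : StrictMonoOn f (Icc 0 1))
    (hf0 : f 0 = 0) (hf1 : f 1 = 1) {α q : ℝ} (hα0 : 0 < α) (hα1 : α < 1)
    (hq0 : 0 < q) (hq1 : q < 1) (hfq : f q = α) :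
    {x : ℝ | α ≤ cdfAt G x} = Ici q ∧ {x : ℝ | f x ≤ α} = Iic q := by
  have key_lt : ∀ x, x < q → f x < α := by
    intro x hx
    rcases le_total x 0 with h | h
    · calc f x ≤ f 0 := hmono h
      _ < α := by rw [hf0]; exact hα0
    · rw [← hfq]
      exact hstrict ⟨h, by linarith⟩ ⟨hq0.le, hq1.le⟩ hx
  have key_gt : ∀ x, q < x → α < f x := by
    intro x hx
    rcases le_total 1 x with h | h
    · calc α < 1 := hα1
      _ = f 1 := hf1.symm
      _ ≤ f x := hmono h
    · rw [← hfq]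
      exact hstrict ⟨hq0.le, hq1.le⟩ ⟨by linarith, h⟩ hx
  constructor
  · ext x
    simp only [mem_setOf_eq, mem_Ici, hf x]
    constructor
    · intro hle
      by_contra hlt
      exact absurd hle (not_le.2 (key_lt x (not_le.1 hlt)))
    · intro hqx
      rw [← hfq]; exact hmono hqx
  · ext x
    simp only [mem_setOf_eq, mem_Iic]
    constructor
    · intro hle
      by_contra hlt
      exact absurd hle (not_le.2 (key_gt x (not_le.1 hlt)))
    · intro hxq
      rw [← hfq]; exact hmono hxq

lemma quantiles_eq {G : Measure ℝ} {f : ℝ → ℝ} (hf : ∀ x, cdfAt G x = f x)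
    (hsing : ∀ y : ℝ, G {y} = 0)
    (hmono : Monotone f) (hstrict : StrictMonoOn f (Icc 0 1))
    (hf0 : f 0 = 0) (hf1 : f 1 = 1) {α q : ℝ} (hα0 : 0 < α) (hα1 : α < 1)
    (hq0 : 0 < q) (hq1 : q < 1) (hfq : f q = α) :
    lowerQuantile G α = q ∧ upperQuantile G α = q := by
  have hlt : ∀ x, cdfLt G x = f x := by
    intro x
    have : cdfLt G x = cdfAt G x := by
      rw [cdfLt, cdfAt]
      congr 1
      apply le_antisymm (measure_mono Set.Iio_subset_Iic_self)
      calc G (Set.Iic x) = G (Set.Iio x ∪ {x}) := by rw [Set.Iio_union_right]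
      _ ≤ G (Set.Iio x) + G {x} := measure_union_le _ _
      _ = G (Set.Iio x) := by rw [hsing x, add_zero]
    rw [this, hf]
  obtain ⟨hs1, hs2⟩ := quantile_sets hf hmono hstrict hf0 hf1 hα0 hα1 hq0 hq1 hfq
  constructor
  · rw [lowerQuantile, hs1, csInf_Ici]
  · rw [upperQuantile]
    have : {x | cdfLt G x ≤ α} = Iic q := by
      rw [← hs2]; ext x; simp [hlt x]
    rw [this, csSup_Iic]

/-- The `α`-quantile of `G2`. -/
def q2v (α : ℝ) : ℝ :=
  if α ≤ 1/2 then α else (if α ≤ 5/8 then 2*α - 1/2 else (2*α+1)/3)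

lemma q2v_spec {α : ℝ} (h0 : 0 < α) (hlt : α < 1) :
    g2 (q2v α) = α ∧ 0 < q2v α ∧ q2v α < 1 := by
  rw [q2v]
  split_ifs with h h'
  · exact ⟨g2_eval_lo h0.le h, h0, hlt⟩
  · push_neg at h
    refine ⟨?_, by linarith, by linarith⟩
    rw [g2_eval_mid (by linarith) (by linarith)]
    ring
  · push_neg at h h'
    refine ⟨?_, by linarith, by linarith⟩
    rw [g2_eval_hi (by linarith) (by linarith)]
    ring

lemma q2v_lo {α : ℝ} (h : α ≤ 1/2) : q2v α = α := if_pos h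

lemma q2v_hi {α : ℝ} (h : 1/2 < α) (hlt : α < 1) : 1/2 < q2v α ∧ α < q2v α := by
  rw [q2v, if_neg (by linarith)]
  split_ifs with h' <;> constructor <;> linarith

/-! ### The prediction space -/

instance unif01_prob : IsProbabilityMeasure unif01 := by
  constructor
  rw [unif01, Measure.restrict_apply_univ, Real.volume_Icc]
  norm_num

abbrev W : Type := (Bool × ℝ) × ℝ

def μ0 : Measure (Bool × ℝ) :=
  (2:ℝ≥0∞)⁻¹ • ((Measure.dirac true).prod Hm1 + (Measure.dirac false).prod Hm2)

def μP : Measure W := μ0.prod unif01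

def Fp : W → Measure ℝ := fun ω => if ω.1.1 = true then G1 else G2
def Yp : W → ℝ := fun ω => ω.1.2
def Up : W → ℝ := fun ω => ω.2
def Av : Set W := {ω : W | ω.1.1 = true}

lemma Av_measurable : MeasurableSet Av := by
  have : Av = (fun ω : W => ω.1.1) ⁻¹' {true} := by ext ω; simp [Av]
  rw [this]
  exact (measurable_fst.comp measurable_fst) (measurableSet_singleton true)

lemma Yp_meas : Measurable Yp := measurable_snd.comp measurable_fst

lemma Fp_measurable : Measurable Fp :=
  Measurable.ite Av_measurable measurable_const measurable_const

lemma Fp_mem_Av {ω : W} (h : ω ∈ Av) : Fp ω = G1 := if_pos h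
lemma Fp_not_mem_Av {ω : W} (h : ω ∉ Av) : Fp ω = G2 := if_neg h

instance μ0_prob : IsProbabilityMeasure μ0 := by
  constructor
  rw [μ0, Measure.smul_apply, Measure.add_apply, smul_eq_mul]
  rw [← Set.univ_prod_univ, Measure.prod_prod, Measure.prod_prod]
  simp only [measure_univ, mul_one, one_mul]
  try rw [one_add_one_eq_two]
  try rw [ENNReal.inv_mul_cancel two_ne_zero (by norm_num)]

instance μP_prob : IsProbabilityMeasure μP := by
  rw [μP]; infer_instance

def E2 (s₁ s₂ : Set ℝ) : Set W :=
  ((({true} : Set Bool) ×ˢ s₁) ∪ (({false} : Set Bool) ×ˢ s₂)) ×ˢ (univ : Set ℝ)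

lemma mem_E2 {s₁ s₂ : Set ℝ} (ω : W) :
    ω ∈ E2 s₁ s₂ ↔ (ω.1.1 = true ∧ ω.1.2 ∈ s₁) ∨ (ω.1.1 = false ∧ ω.1.2 ∈ s₂) := by
  obtain ⟨⟨b, y⟩, u⟩ := ω
  simp [E2]

lemma E2_measurable {s₁ s₂ : Set ℝ} (h₁ : MeasurableSet s₁) (h₂ : MeasurableSet s₂) :
    MeasurableSet (E2 s₁ s₂) :=
  (((measurableSet_singleton true).prod h₁).union
    ((measurableSet_singleton false).prod h₂)).prod MeasurableSet.univ

lemma μP_E2 {s₁ s₂ : Set ℝ} (h₁ : MeasurableSet s₁) (h₂ : MeasurableSet s₂) :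
    μP (E2 s₁ s₂) = 2⁻¹ * (Hm1 s₁ + Hm2 s₂) := by
  have hdis : Disjoint (({true} : Set Bool) ×ˢ s₁) (({false} : Set Bool) ×ˢ s₂) := by
    rw [Set.disjoint_left]
    rintro ⟨b, y⟩ ⟨hb, -⟩ ⟨hb', -⟩
    simp only [mem_prod, mem_singleton_iff] at hb hb'
    rw [hb] at hb'
    simp at hb'
  have hm₂ : MeasurableSet (({false} : Set Bool) ×ˢ s₂) := (measurableSet_singleton false).prod h₂
  rw [μP, E2, Measure.prod_prod, measure_univ, mul_one, μ0, Measure.smul_apply, smul_eq_mul,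
    Measure.add_apply, measure_union hdis hm₂, measure_union hdis hm₂,
    Measure.prod_prod, Measure.prod_prod, Measure.prod_prod, Measure.prod_prod]
  simp [Measure.dirac_apply]

lemma μP_E2_toReal {s₁ s₂ : Set ℝ} (h₁ : MeasurableSet s₁) (h₂ : MeasurableSet s₂) :
    (μP (E2 s₁ s₂)).toReal = ((Hm1 s₁).toReal + (Hm2 s₂).toReal) / 2 := by
  rw [μP_E2 h₁ h₂, ENNReal.toReal_mul,
    ENNReal.toReal_add (measure_ne_top _ _) (measure_ne_top _ _)]
  simp
  ring

lemma Av_eq_E2 : Av = E2 univ ∅ := by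
  ext ω
  rw [mem_E2]
  obtain ⟨⟨b, y⟩, u⟩ := ω
  cases b <;> simp [Av]

lemma Av_compl_eq_E2 : Avᶜ = E2 ∅ univ := by
  ext ω
  rw [mem_compl_iff, mem_E2]
  obtain ⟨⟨b, y⟩, u⟩ := ω
  cases b <;> simp [Av]

lemma E2_inter_Av (s₁ s₂ : Set ℝ) : E2 s₁ s₂ ∩ Av = E2 s₁ ∅ := by
  ext ω
  rw [mem_inter_iff, mem_E2, mem_E2]
  obtain ⟨⟨b, y⟩, u⟩ := ω
  cases b <;> simp [Av]

lemma E2_inter_Av_compl (s₁ s₂ : Set ℝ) : E2 s₁ s₂ ∩ Avᶜ = E2 ∅ s₂ := by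
  ext ω
  rw [mem_inter_iff, mem_compl_iff, mem_E2, mem_E2]
  obtain ⟨⟨b, y⟩, u⟩ := ω
  cases b <;> simp [Av]

lemma Yp_preimage (s : Set ℝ) : Yp ⁻¹' s = E2 s s := by
  ext ω
  rw [mem_preimage, mem_E2]
  obtain ⟨⟨b, y⟩, u⟩ := ω
  cases b <;> simp [Yp]

lemma Av_inter_Yp (s : Set ℝ) : Av ∩ Yp ⁻¹' s = E2 s ∅ := by
  ext ω
  rw [mem_inter_iff, mem_preimage, mem_E2]
  obtain ⟨⟨b, y⟩, u⟩ := ω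
  cases b <;> simp [Yp, Av]

lemma Av_compl_inter_Yp (s : Set ℝ) : Avᶜ ∩ Yp ⁻¹' s = E2 ∅ s := by
  ext ω
  rw [mem_inter_iff, mem_compl_iff, mem_preimage, mem_E2]
  obtain ⟨⟨b, y⟩, u⟩ := ω
  cases b <;> simp [Yp, Av]

lemma μP_Av : μP Av = 2⁻¹ := by
  rw [Av_eq_E2, μP_E2 MeasurableSet.univ MeasurableSet.empty]
  simp

lemma μP_Av_toReal : (μP Av).toReal = 1/2 := by
  rw [μP_Av]
  simp [ENNReal.toReal_inv]
  try norm_num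

lemma μP_Av_compl : μP Avᶜ = 2⁻¹ := by
  rw [Av_compl_eq_E2, μP_E2 MeasurableSet.empty MeasurableSet.univ]
  simp

lemma μP_Av_compl_toReal : (μP Avᶜ).toReal = 1/2 := by
  rw [Av_compl_eq_E2, μP_E2_toReal MeasurableSet.empty MeasurableSet.univ]
  simp

lemma predSpace : IsPredictionSpace μP Fp Yp Up := by
  constructor
  · exact μP_prob
  · intro ω
    by_cases hb : ω.1.1 = true
    · rw [Fp_mem_Av hb]; infer_instance
    · rw [Fp_not_mem_Av hb]; infer_instance
  · exact Fp_measurable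
  · exact measurable_snd.comp measurable_fst
  · exact measurable_snd
  · have : Up = (Prod.snd : W → ℝ) := rfl
    rw [this, μP, Measure.map_snd_prod, measure_univ, one_smul]
  · have hfst : IndepFun Prod.fst Prod.snd μP := by
      rw [indepFun_iff_map_prod_eq_prod_map_map measurable_fst.aemeasurable
        measurable_snd.aemeasurable]
      have h1 : (fun ω : W => (ω.1, ω.2)) = id := by funext ω; rfl
      rw [h1, Measure.map_id, μP, Measure.map_fst_prod, Measure.map_snd_prod,
        measure_univ, measure_univ, one_smul, one_smul]
    have h2 : Indep (MeasurableSpace.comap Prod.snd inferInstance)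
        (MeasurableSpace.comap Prod.fst inferInstance) μP :=
      (IndepFun_iff_Indep _ _ _).1 hfst.symm
    apply indep_of_indep_of_le_right h2
    apply sup_le
    · have : Fp = (fun p : Bool × ℝ => if p.1 = true then G1 else G2) ∘ Prod.fst := rfl
      rw [this, ← MeasurableSpace.comap_comp]
      exact MeasurableSpace.comap_mono (Measurable.comap_le (by
        apply Measurable.ite _ measurable_const measurable_const
        exact measurable_fst (measurableSet_singleton true)))
    · have : Yp = (Prod.snd : Bool × ℝ → ℝ) ∘ Prod.fst := rfl
      rw [this, ← MeasurableSpace.comap_comp]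
      exact MeasurableSpace.comap_mono (Measurable.comap_le measurable_snd)

/-! ### Conditional expectation master lemma -/

lemma two_valued_preimage_classify {Ω' : Type*} {A : Set Ω'} {h : Ω' → ℝ} {d₁ d₂ : ℝ}
    (hh1 : ∀ ω ∈ A, h ω = d₁) (hh2 : ∀ ω ∉ A, h ω = d₂) (B : Set ℝ) :
    h ⁻¹' B = ∅ ∨ (h ⁻¹' B = A ∧ d₁ ≠ d₂) ∨ (h ⁻¹' B = Aᶜ ∧ d₁ ≠ d₂) ∨ h ⁻¹' B = univ := by
  by_cases hd1 : d₁ ∈ B <;> by_cases hd2 : d₂ ∈ B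
  · refine Or.inr (Or.inr (Or.inr ?_))
    ext ω; simp only [mem_preimage, mem_univ, iff_true]
    by_cases hω : ω ∈ A
    · rw [hh1 ω hω]; exact hd1
    · rw [hh2 ω hω]; exact hd2
  · refine Or.inr (Or.inl ⟨?_, fun he => hd2 (he ▸ hd1)⟩)
    ext ω; simp only [mem_preimage]
    constructor
    · intro hB; by_contra hω; rw [hh2 ω hω] at hB; exact hd2 hB
    · intro hω; rw [hh1 ω hω]; exact hd1
  · refine Or.inr (Or.inr (Or.inl ⟨?_, fun he => hd1 (he ▸ hd2)⟩))
    ext ω; simp only [mem_preimage, mem_compl_iff]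
    constructor
    · intro hB hω; rw [hh1 ω hω] at hB; exact hd1 hB
    · intro hω; rw [hh2 ω hω]; exact hd2
  · left
    ext ω; simp only [mem_preimage, mem_empty_iff_false, iff_false]
    intro hB
    by_cases hω : ω ∈ A
    · rw [hh1 ω hω] at hB; exact hd1 hB
    · rw [hh2 ω hω] at hB; exact hd2 hB

lemma condExp_two_valued {Ω' : Type*} {m0 : MeasurableSpace Ω'}
    (μ : Measure Ω') [IsProbabilityMeasure μ]
    {A : Set Ω'} {h g f : Ω' → ℝ} {d₁ d₂ : ℝ}
    (hh1 : ∀ ω ∈ A, h ω = d₁) (hh2 : ∀ ω ∉ A, h ω = d₂) (hhm : Measurable h)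
    (hf : Integrable f μ) (hg : Integrable g μ)
    (hgm : Measurable[MeasurableSpace.comap h Real.measurableSpace] g)
    (heA : d₁ ≠ d₂ → ∫ ω in A, g ω ∂μ = ∫ ω in A, f ω ∂μ)
    (heAc : d₁ ≠ d₂ → ∫ ω in Aᶜ, g ω ∂μ = ∫ ω in Aᶜ, f ω ∂μ)
    (htot : ∫ ω, g ω ∂μ = ∫ ω, f ω ∂μ) :
    μ[f | MeasurableSpace.comap h Real.measurableSpace] =ᵐ[μ] g := by
  have hm : MeasurableSpace.comap h Real.measurableSpace ≤ m0 := hhm.comap_le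
  haveI : SigmaFinite (μ.trim hm) := by
    haveI : IsFiniteMeasure (μ.trim hm) := isFiniteMeasure_trim hm
    infer_instance
  refine (ae_eq_condExp_of_forall_setIntegral_eq hm hf
    (fun s _ _ => hg.integrableOn) ?_ ?_).symm
  · rintro s ⟨B, -, rfl⟩ -
    rcases two_valued_preimage_classify hh1 hh2 B with hs | ⟨hs, hne⟩ | ⟨hs, hne⟩ | hs
    · rw [hs]; simp
    · rw [hs]; exact heA hne
    · rw [hs]; exact heAc hne
    · rw [hs]
      simpa [Measure.restrict_univ] using htot
  · exact StronglyMeasurable.aestronglyMeasurable hgm.stronglyMeasurable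

/-! ### Integral helpers -/

lemma integral_indicator_E2 {s₁ s₂ : Set ℝ} (h₁ : MeasurableSet s₁) (h₂ : MeasurableSet s₂) :
    ∫ ω, Set.indicator (E2 s₁ s₂) (fun _ => (1:ℝ)) ω ∂μP
      = ((Hm1 s₁).toReal + (Hm2 s₂).toReal) / 2 := by
  rw [MeasureTheory.integral_indicator (E2_measurable h₁ h₂), setIntegral_const, smul_eq_mul,
    mul_one, measureReal_def, μP_E2_toReal h₁ h₂]

lemma setIntegral_indicator_E2_Av {s₁ s₂ : Set ℝ}
    (h₁ : MeasurableSet s₁) (h₂ : MeasurableSet s₂) :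
    ∫ ω in Av, Set.indicator (E2 s₁ s₂) (fun _ => (1:ℝ)) ω ∂μP = (Hm1 s₁).toReal / 2 := by
  rw [setIntegral_indicator (E2_measurable h₁ h₂)]
  have : Av ∩ E2 s₁ s₂ = E2 s₁ ∅ := by rw [inter_comm]; exact E2_inter_Av s₁ s₂
  rw [this, setIntegral_const, smul_eq_mul, mul_one,
    measureReal_def, μP_E2_toReal h₁ MeasurableSet.empty]
  simp

lemma setIntegral_indicator_E2_Av_compl {s₁ s₂ : Set ℝ}
    (h₁ : MeasurableSet s₁) (h₂ : MeasurableSet s₂) :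
    ∫ ω in Avᶜ, Set.indicator (E2 s₁ s₂) (fun _ => (1:ℝ)) ω ∂μP = (Hm2 s₂).toReal / 2 := by
  rw [setIntegral_indicator (E2_measurable h₁ h₂)]
  have : Avᶜ ∩ E2 s₁ s₂ = E2 ∅ s₂ := by rw [inter_comm]; exact E2_inter_Av_compl s₁ s₂
  rw [this, setIntegral_const, smul_eq_mul, mul_one,
    measureReal_def, μP_E2_toReal MeasurableSet.empty h₂]
  simp

lemma setIntegral_const_Av {c : ℝ} {g : W → ℝ} (hg : ∀ ω ∈ Av, g ω = c) :
    ∫ ω in Av, g ω ∂μP = c / 2 := by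
  rw [setIntegral_congr_fun Av_measurable hg, setIntegral_const, measureReal_def, μP_Av_toReal, smul_eq_mul]
  ring

lemma setIntegral_const_Av_compl {c : ℝ} {g : W → ℝ} (hg : ∀ ω ∈ Avᶜ, g ω = c) :
    ∫ ω in Avᶜ, g ω ∂μP = c / 2 := by
  rw [setIntegral_congr_fun Av_measurable.compl hg, setIntegral_const,
    measureReal_def, μP_Av_compl_toReal, smul_eq_mul]
  ring

lemma integrable_two_valued {c d : ℝ} {g : W → ℝ}
    (hg1 : ∀ ω ∈ Av, g ω = c) (hg2 : ∀ ω ∉ Av, g ω = d) : Integrable g μP := by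
  have : g = fun ω => Set.indicator Av (fun _ => c) ω + Set.indicator Avᶜ (fun _ => d) ω := by
    funext ω
    by_cases hω : ω ∈ Av
    · rw [hg1 ω hω, Set.indicator_of_mem hω, Set.indicator_of_notMem (by simpa using hω)]
      ring
    · rw [hg2 ω hω, Set.indicator_of_notMem hω, Set.indicator_of_mem (by simpa using hω)]
      ring
  rw [this]
  exact ((integrable_const c).indicator Av_measurable).add
    ((integrable_const d).indicator Av_measurable.compl)

/-! ### Key facts about the CDF values -/

lemma cdfAt_Fp_Av {ω : W} (hω : ω ∈ Av) (t : ℝ) : cdfAt (Fp ω) t = g1 t := by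
  rw [Fp_mem_Av hω, cdfAt_G1]
lemma cdfAt_Fp_not_Av {ω : W} (hω : ω ∉ Av) (t : ℝ) : cdfAt (Fp ω) t = g2 t := by
  rw [Fp_not_mem_Av hω, cdfAt_G2]

lemma PIT_eq (ω : W) : PIT Fp Yp Up ω = cdfAt (Fp ω) (Yp ω) := by
  have hsing : ∀ y : ℝ, Fp ω {y} = 0 := by
    intro y
    by_cases hω : ω ∈ Av
    · rw [Fp_mem_Av hω]; exact G1_singleton y
    · rw [Fp_not_mem_Av hω]; exact G2_singleton y
  have hlt : cdfLt (Fp ω) (Yp ω) = cdfAt (Fp ω) (Yp ω) := by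
    rw [cdfLt, cdfAt]
    congr 1
    apply le_antisymm (measure_mono Set.Iio_subset_Iic_self)
    calc Fp ω (Set.Iic (Yp ω)) = Fp ω (Set.Iio (Yp ω) ∪ {Yp ω}) := by rw [Set.Iio_union_right]
    _ ≤ Fp ω (Set.Iio (Yp ω)) + Fp ω {Yp ω} := measure_union_le _ _
    _ = Fp ω (Set.Iio (Yp ω)) := by rw [hsing (Yp ω), add_zero]
  rw [PIT, hlt]
  ring

end AuxHelpers

section MainProofParts

open Set
open scoped ENNReal

/-- The set `{PIT ≤ α}` is an explicit rectangle-type set. -/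
lemma PIT_le_set {α : ℝ} (hα0 : 0 < α) (hα1 : α < 1) :
    {ω : W | PIT Fp Yp Up ω ≤ α} = E2 (Iic α) (Iic (q2v α)) := by
  obtain ⟨hg2q, hq0, hq1⟩ := q2v_spec hα0 hα1
  have hs1 : {x : ℝ | g1 x ≤ α} = Iic α :=
    (quantile_sets cdfAt_G1 g1_mono g1_strict g1_zero g1_one hα0 hα1 hα0 hα1
      (g1_eval hα0.le hα1.le)).2
  have hs2 : {x : ℝ | g2 x ≤ α} = Iic (q2v α) :=
    (quantile_sets cdfAt_G2 g2_mono g2_strict g2_zero g2_one hα0 hα1 hq0 hq1 hg2q).2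
  ext ω
  rw [mem_setOf_eq, PIT_eq, mem_E2]
  by_cases hω : ω.1.1 = true
  · rw [cdfAt_Fp_Av hω]
    have : (ω.1.2 ∈ Iic α) ↔ g1 (ω.1.2) ≤ α := by
      rw [← hs1]; rfl
    simp [hω, this, Yp]
  · have hωf : ω.1.1 = false := by simpa using hω
    rw [cdfAt_Fp_not_Av hω]
    have : (ω.1.2 ∈ Iic (q2v α)) ↔ g2 (ω.1.2) ≤ α := by
      rw [← hs2]; rfl
    simp [hω, hωf, this, Yp]

lemma lowerQuantile_Fp {α : ℝ} (hα0 : 0 < α) (hα1 : α < 1) :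
    (∀ ω ∈ Av, lowerQuantile (Fp ω) α = α) ∧
    (∀ ω ∉ Av, lowerQuantile (Fp ω) α = q2v α) ∧
    (∀ ω ∈ Av, upperQuantile (Fp ω) α = α) ∧
    (∀ ω ∉ Av, upperQuantile (Fp ω) α = q2v α) := by
  obtain ⟨hg2q, hq0, hq1⟩ := q2v_spec hα0 hα1
  have h1 := quantiles_eq cdfAt_G1 G1_singleton g1_mono g1_strict g1_zero g1_one hα0 hα1 hα0 hα1
    (g1_eval hα0.le hα1.le)
  have h2 := quantiles_eq cdfAt_G2 G2_singleton g2_mono g2_strict g2_zero g2_one hα0 hα1 hq0 hq1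
    hg2q
  exact ⟨fun ω hω => by rw [Fp_mem_Av hω]; exact h1.1,
    fun ω hω => by rw [Fp_not_mem_Av hω]; exact h2.1,
    fun ω hω => by rw [Fp_mem_Av hω]; exact h1.2,
    fun ω hω => by rw [Fp_not_mem_Av hω]; exact h2.2⟩

lemma cepCal : CEPCalibrated μP Fp Yp Up := by
  classical
  intro α ⟨hα0, hα1⟩
  obtain ⟨hg2q, hq0, hq1⟩ := q2v_spec hα0 hα1
  obtain ⟨hql1, hql2, -, -⟩ := lowerQuantile_Fp hα0 hα1
  have hSq : {ω : W | PIT Fp Yp Up ω ≤ α} = E2 (Iic α) (Iic (q2v α)) := PIT_le_set hα0 hα1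
  have hhm : Measurable (fun ω : W => lowerQuantile (Fp ω) α) := by
    have : (fun ω : W => lowerQuantile (Fp ω) α)
        = fun ω : W => if ω ∈ Av then α else q2v α := by
      funext ω
      by_cases hω : ω ∈ Av
      · rw [hql1 ω hω, if_pos hω]
      · rw [hql2 ω hω, if_neg hω]
    rw [this]
    exact Measurable.ite Av_measurable measurable_const measurable_const
  have hf : Integrable (Set.indicator {ω : W | PIT Fp Yp Up ω ≤ α} fun _ => (1:ℝ)) μP := by
    rw [hSq]
    exact (integrable_const 1).indicator (E2_measurable measurableSet_Iic measurableSet_Iic)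
  -- case facts
  have hHm1α : 1/2 < α → (Hm1 (Iic α)).toReal = α := by
    intro h
    have e := cdfAt_Hm1 α
    rw [cdfAt] at e
    rw [e, h1_eval_hi h.le hα1.le]
  have hHm2q : 1/2 < α → (Hm2 (Iic (q2v α))).toReal = α := by
    intro h
    have := cdfAt_Hm2 (q2v α)
    rw [cdfAt] at this
    rw [this, h2_eq_g2_hi (q2v_hi h hα1).1.le, hg2q]
  refine condExp_two_valued μP hql1 hql2 hhm hf (integrable_const α)
    measurable_const ?_ ?_ ?_
  · intro hne
    have hgt : 1/2 < α := by
      by_contra hle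
      push_neg at hle
      exact hne (q2v_lo hle).symm
    rw [setIntegral_const_Av (fun ω _ => rfl), hSq,
      setIntegral_indicator_E2_Av measurableSet_Iic measurableSet_Iic, hHm1α hgt]
  · intro hne
    have hgt : 1/2 < α := by
      by_contra hle
      push_neg at hle
      exact hne (q2v_lo hle).symm
    rw [setIntegral_const_Av_compl (fun ω _ => rfl), hSq,
      setIntegral_indicator_E2_Av_compl measurableSet_Iic measurableSet_Iic, hHm2q hgt]
  · rw [hSq, integral_indicator_E2 measurableSet_Iic measurableSet_Iic, integral_const,
      measureReal_def, measure_univ, ENNReal.toReal_one, one_smul]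
    have e1 : (Hm1 (Iic α)).toReal = h1 α := by
      have := cdfAt_Hm1 α; rwa [cdfAt] at this
    have e2 : (Hm2 (Iic (q2v α))).toReal = h2 (q2v α) := by
      have := cdfAt_Hm2 (q2v α); rwa [cdfAt] at this
    rw [e1, e2]
    rcases le_or_gt α (1/2) with h | h
    · rw [q2v_lo h]
      have := sum_identity α
      have eg1 : g1 α = α := g1_eval hα0.le hα1.le
      have eg2 : g2 α = α := g2_eval_lo hα0.le h
      linarith
    · rw [h1_eval_hi h.le hα1.le, h2_eq_g2_hi (q2v_hi h hα1).1.le, hg2q]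
      ring

lemma threshCal : ThreshCalibrated μP Fp Yp := by
  classical
  intro t
  have hYset : {ω : W | Yp ω ≤ t} = E2 (Iic t) (Iic t) := by
    ext ω
    rw [mem_setOf_eq, mem_E2]
    obtain ⟨⟨b, y⟩, u⟩ := ω
    cases b <;> simp [Yp]
  have hh1 : ∀ ω ∈ Av, cdfAt (Fp ω) t = g1 t := fun ω hω => cdfAt_Fp_Av hω t
  have hh2 : ∀ ω ∉ Av, cdfAt (Fp ω) t = g2 t := fun ω hω => cdfAt_Fp_not_Av hω t
  have hhm : Measurable (fun ω : W => cdfAt (Fp ω) t) := by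
    have : (fun ω : W => cdfAt (Fp ω) t) = fun ω : W => if ω ∈ Av then g1 t else g2 t := by
      funext ω
      by_cases hω : ω ∈ Av
      · rw [hh1 ω hω, if_pos hω]
      · rw [hh2 ω hω, if_neg hω]
    rw [this]
    exact Measurable.ite Av_measurable measurable_const measurable_const
  have hf : Integrable (Set.indicator {ω : W | Yp ω ≤ t} fun _ => (1:ℝ)) μP := by
    rw [hYset]
    exact (integrable_const 1).indicator (E2_measurable measurableSet_Iic measurableSet_Iic)
  have e1 : (Hm1 (Iic t)).toReal = h1 t := by
    have := cdfAt_Hm1 t; rwa [cdfAt] at this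
  have e2 : (Hm2 (Iic t)).toReal = h2 t := by
    have := cdfAt_Hm2 t; rwa [cdfAt] at this
  refine condExp_two_valued μP hh1 hh2 hhm hf
    (integrable_two_valued hh1 hh2) (Measurable.of_comap_le le_rfl) ?_ ?_ ?_
  · intro hne
    rw [setIntegral_const_Av hh1, hYset,
      setIntegral_indicator_E2_Av measurableSet_Iic measurableSet_Iic, e1]
    rcases h1_eq_g1_or t with h | h
    · rw [h]
    · exact absurd h hne
  · intro hne
    rw [setIntegral_const_Av_compl hh2, hYset,
      setIntegral_indicator_E2_Av_compl measurableSet_Iic measurableSet_Iic, e2]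
    rcases h2_eq_g2_or t with h | h
    · rw [h]
    · exact absurd h hne
  · rw [← integral_add_compl Av_measurable (integrable_two_valued hh1 hh2),
      setIntegral_const_Av hh1, setIntegral_const_Av_compl hh2, hYset,
      integral_indicator_E2 measurableSet_Iic measurableSet_Iic, e1, e2]
    have := sum_identity t
    linarith

/-- The mixture distribution `(Hm1 + Hm2)/2`, which is the unconditional law of `Y`. -/
def Mx : Measure ℝ := (2:ℝ≥0∞)⁻¹ • (Hm1 + Hm2)

lemma Mx_apply {s : Set ℝ} : Mx s = 2⁻¹ * (Hm1 s + Hm2 s) := by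
  rw [Mx, Measure.smul_apply, smul_eq_mul, Measure.add_apply]

lemma cdfAt_Mx (x : ℝ) : cdfAt Mx x = mcdf x := by
  rw [cdfAt, Mx_apply, ENNReal.toReal_mul,
    ENNReal.toReal_add (measure_ne_top _ _) (measure_ne_top _ _), mcdf]
  have e1 : (Hm1 (Iic x)).toReal = h1 x := by
    have := cdfAt_Hm1 x; rwa [cdfAt] at this
  have e2 : (Hm2 (Iic x)).toReal = h2 x := by
    have := cdfAt_Hm2 x; rwa [cdfAt] at this
  rw [e1, e2]
  simp [ENNReal.toReal_inv]
  try ring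

lemma Mx_singleton (y : ℝ) : Mx {y} = 0 := by
  rw [Mx_apply, Hm1_singleton, Hm2_singleton]
  simp

lemma quantCal (inst : IsFiniteMeasure μP) : @QuantileCalibrated W _ μP inst Fp Yp := by
  classical
  intro α ⟨hα0, hα1⟩
  obtain ⟨hg2q, hq0, hq1⟩ := q2v_spec hα0 hα1
  obtain ⟨hql1, hql2, hqu1, hqu2⟩ := lowerQuantile_Fp hα0 hα1
  rcases le_or_gt α (1/2) with hle | hgt
  · -- constant conditioning variable; conditional law is the mixture Mx
    have hq2 : q2v α = α := q2v_lo hle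
    have hXconst : qPairOf Fp α = fun _ => ((α, α) : ℝ × ℝ) := by
      funext ω
      rw [qPairOf]
      by_cases hω : ω ∈ Av
      · rw [hql1 ω hω, hqu1 ω hω]
      · rw [hql2 ω hω, hqu2 ω hω, hq2]
    have hXmeas : Measurable (qPairOf Fp α) := by rw [hXconst]; exact measurable_const
    have hXY_meas : Measurable (fun ω : W => (qPairOf Fp α ω, Yp ω)) := hXmeas.prodMk Yp_meas
    have hpre : qPairOf Fp α ⁻¹' {((α, α) : ℝ × ℝ)} = univ := by
      rw [hXconst]; ext ω; simp
    have hmap : μP.map (qPairOf Fp α) {((α, α) : ℝ × ℝ)} ≠ 0 := by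
      rw [Measure.map_apply hXmeas (measurableSet_singleton _), hpre, measure_univ]
      simp
    have hkernel : condDistrib Yp (qPairOf Fp α) μP ((α, α) : ℝ × ℝ) = Mx := by
      apply Measure.ext
      intro s hs
      rw [condDistrib_apply_of_ne_zero Yp_meas _ hmap s,
        Measure.map_apply hXY_meas ((measurableSet_singleton _).prod hs),
        Set.mk_preimage_prod, hpre, Set.univ_inter, Yp_preimage, μP_E2 hs hs,
        Measure.map_apply hXmeas (measurableSet_singleton _), hpre, measure_univ,
        inv_one, one_mul, Mx_apply]
    have hMxq : lowerQuantile Mx α = α ∧ upperQuantile Mx α = α := by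
      apply quantiles_eq cdfAt_Mx Mx_singleton mcdf_mono mcdf_strict mcdf_zero mcdf_one
        hα0 hα1 hα0 hα1
      rw [mcdf]
      have := sum_identity α
      have eg1 : g1 α = α := g1_eval hα0.le hα1.le
      have eg2 : g2 α = α := g2_eval_lo hα0.le hle
      linarith
    apply Filter.Eventually.of_forall
    intro ω
    have hXω : qPairOf Fp α ω = ((α, α) : ℝ × ℝ) := by rw [hXconst]
    rw [hXω, hkernel, hMxq.1, hMxq.2]
    by_cases hω : ω ∈ Av
    · rw [hql1 ω hω, hqu1 ω hω]; exact ⟨rfl, rfl⟩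
    · rw [hql2 ω hω, hqu2 ω hω, hq2]; exact ⟨rfl, rfl⟩
  · -- two-valued conditioning variable
    set q := q2v α with hqdef
    have hαq : α < q := (q2v_hi hgt hα1).2
    have hq_half : 1/2 < q := (q2v_hi hgt hα1).1
    have hXeq : qPairOf Fp α
        = fun ω => if ω ∈ Av then ((α, α) : ℝ × ℝ) else ((q, q) : ℝ × ℝ) := by
      funext ω
      rw [qPairOf]
      by_cases hω : ω ∈ Av
      · rw [hql1 ω hω, hqu1 ω hω, if_pos hω]
      · rw [hql2 ω hω, hqu2 ω hω, if_neg hω]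
    have hXmeas : Measurable (qPairOf Fp α) := by
      rw [hXeq]
      exact Measurable.ite Av_measurable measurable_const measurable_const
    have hXY_meas : Measurable (fun ω : W => (qPairOf Fp α ω, Yp ω)) :=
      hXmeas.prodMk Yp_meas
    have hpre1 : qPairOf Fp α ⁻¹' {((α, α) : ℝ × ℝ)} = Av := by
      ext ω
      rw [mem_preimage, mem_singleton_iff, hXeq]
      by_cases hω : ω ∈ Av
      · simp [hω]
      · simp only [if_neg hω]
        constructor
        · intro he
          exact absurd (congrArg Prod.fst he) (by simpa using hαq.ne')
        · intro he; exact absurd he hω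
    have hpre2 : qPairOf Fp α ⁻¹' {((q, q) : ℝ × ℝ)} = Avᶜ := by
      ext ω
      rw [mem_preimage, mem_singleton_iff, hXeq, mem_compl_iff]
      by_cases hω : ω ∈ Av
      · simp only [if_pos hω]
        constructor
        · intro he
          exact absurd (congrArg Prod.fst he) (by simpa using hαq.ne)
        · intro he; exact absurd hω he
      · simp [hω]
    have hmap1 : μP.map (qPairOf Fp α) {((α, α) : ℝ × ℝ)} ≠ 0 := by
      rw [Measure.map_apply hXmeas (measurableSet_singleton _), hpre1, μP_Av]
      simp
    have hmap2 : μP.map (qPairOf Fp α) {((q, q) : ℝ × ℝ)} ≠ 0 := by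
      rw [Measure.map_apply hXmeas (measurableSet_singleton _), hpre2, μP_Av_compl]
      simp
    have hker1 : condDistrib Yp (qPairOf Fp α) μP ((α, α) : ℝ × ℝ) = Hm1 := by
      apply Measure.ext
      intro s hs
      rw [condDistrib_apply_of_ne_zero Yp_meas _ hmap1 s,
        Measure.map_apply hXY_meas ((measurableSet_singleton _).prod hs),
        Set.mk_preimage_prod, hpre1, Av_inter_Yp, μP_E2 hs MeasurableSet.empty,
        Measure.map_apply hXmeas (measurableSet_singleton _), hpre1, μP_Av,
        measure_empty, add_zero, inv_inv, ← mul_assoc,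
        ENNReal.mul_inv_cancel two_ne_zero (by norm_num), one_mul]
    have hker2 : condDistrib Yp (qPairOf Fp α) μP ((q, q) : ℝ × ℝ) = Hm2 := by
      apply Measure.ext
      intro s hs
      rw [condDistrib_apply_of_ne_zero Yp_meas _ hmap2 s,
        Measure.map_apply hXY_meas ((measurableSet_singleton _).prod hs),
        Set.mk_preimage_prod, hpre2, Av_compl_inter_Yp, μP_E2 MeasurableSet.empty hs,
        Measure.map_apply hXmeas (measurableSet_singleton _), hpre2, μP_Av_compl,
        measure_empty, zero_add, inv_inv, ← mul_assoc,
        ENNReal.mul_inv_cancel two_ne_zero (by norm_num), one_mul]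
    have hHm1q : lowerQuantile Hm1 α = α ∧ upperQuantile Hm1 α = α :=
      quantiles_eq cdfAt_Hm1 Hm1_singleton h1_mono h1_strict h1_zero h1_one hα0 hα1 hα0 hα1
        (h1_eval_hi hgt.le hα1.le)
    have hHm2q : lowerQuantile Hm2 α = q ∧ upperQuantile Hm2 α = q := by
      apply quantiles_eq cdfAt_Hm2 Hm2_singleton h2_mono h2_strict h2_zero h2_one hα0 hα1 hq0 hq1
      rw [h2_eq_g2_hi hq_half.le]
      exact hg2q
    apply Filter.Eventually.of_forall
    intro ω
    by_cases hω : ω ∈ Av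
    · have hXω : qPairOf Fp α ω = ((α, α) : ℝ × ℝ) := by
        rw [hXeq]; exact if_pos hω
      rw [hXω, hker1, hHm1q.1, hHm1q.2, hql1 ω hω, hqu1 ω hω]
      exact ⟨rfl, rfl⟩
    · have hXω : qPairOf Fp α ω = ((q, q) : ℝ × ℝ) := by
        rw [hXeq]; exact if_neg hω
      rw [hXω, hker2, hHm2q.1, hHm2q.2, hql2 ω hω, hqu2 ω hω]
      exact ⟨rfl, rfl⟩

lemma notAuto : ¬ AutoCalibrated μP Fp Yp := by
  intro hAC
  have hae := hAC (1/4)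
  have hm : MeasurableSpace.comap Fp inferInstance ≤ (inferInstance : MeasurableSpace W) :=
    Fp_measurable.comap_le
  haveI : SigmaFinite (μP.trim hm) := by
    haveI : IsFiniteMeasure (μP.trim hm) := isFiniteMeasure_trim hm
    infer_instance
  have hYset : {ω : W | Yp ω ≤ 1/4} = E2 (Iic (1/4)) (Iic (1/4)) := by
    ext ω
    rw [mem_setOf_eq, mem_E2]
    obtain ⟨⟨b, y⟩, u⟩ := ω
    cases b <;> simp [Yp]
  have hf : Integrable (Set.indicator {ω : W | Yp ω ≤ 1/4} fun _ => (1:ℝ)) μP := by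
    rw [hYset]
    exact (integrable_const 1).indicator (E2_measurable measurableSet_Iic measurableSet_Iic)
  have hAvm : MeasurableSet[MeasurableSpace.comap Fp inferInstance] Av := by
    refine ⟨{m : Measure ℝ | (5/8 : ℝ) < cdfAt m (3/4)}, ?_, ?_⟩
    · have : {m : Measure ℝ | (5/8 : ℝ) < cdfAt m (3/4)}
          = (fun m : Measure ℝ => cdfAt m (3/4)) ⁻¹' (Ioi (5/8)) := rfl
      rw [this]
      exact (ENNReal.measurable_toReal.comp
        (Measure.measurable_coe measurableSet_Iic)) measurableSet_Ioi
    · ext ω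
      rw [mem_preimage, mem_setOf_eq]
      by_cases hω : ω ∈ Av
      · rw [Fp_mem_Av hω, cdfAt_G1, g1_eval (by norm_num) (by norm_num)]
        simp [hω]
        norm_num
      · rw [Fp_not_mem_Av hω, cdfAt_G2, g2_eval_mid (by norm_num) le_rfl]
        simp [hω]
        norm_num
  have h1_int : ∫ ω in Av, (μP[Set.indicator {ω : W | Yp ω ≤ 1/4} (fun _ => (1:ℝ)) |
      MeasurableSpace.comap Fp inferInstance]) ω ∂μP
      = ∫ ω in Av, Set.indicator {ω : W | Yp ω ≤ 1/4} (fun _ => (1:ℝ)) ω ∂μP :=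
    setIntegral_condExp hm hf hAvm
  have h2_int : ∫ ω in Av, cdfAt (Fp ω) (1/4) ∂μP
      = ∫ ω in Av, (μP[Set.indicator {ω : W | Yp ω ≤ 1/4} (fun _ => (1:ℝ)) |
        MeasurableSpace.comap Fp inferInstance]) ω ∂μP :=
    setIntegral_congr_ae Av_measurable (hae.mono fun ω h _ => h)
  have hLHS : ∫ ω in Av, cdfAt (Fp ω) (1/4) ∂μP = 1/8 := by
    rw [setIntegral_const_Av (fun ω hω => by
      rw [cdfAt_Fp_Av hω, g1_eval (by norm_num) (by norm_num)])]
    norm_num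
  have hRHS : ∫ ω in Av, Set.indicator {ω : W | Yp ω ≤ 1/4} (fun _ => (1:ℝ)) ω ∂μP = 1/16 := by
    rw [hYset, setIntegral_indicator_E2_Av measurableSet_Iic measurableSet_Iic]
    have e1 : (Hm1 (Iic (1/4 : ℝ))).toReal = h1 (1/4) := by
      have := cdfAt_Hm1 (1/4 : ℝ); rwa [cdfAt] at this
    rw [e1, h1_eval_quarter]
    norm_num
  have hcontr : (1/8 : ℝ) = 1/16 := by
    rw [← hLHS, h2_int, h1_int, hRHS]
  norm_num at hcontr

lemma csiProof : CSI {G1, G2} := by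
  refine ⟨Icc 0 1, ⟨0, by norm_num⟩, Set.ordConnected_Icc, ?_⟩
  intro G hG
  have : cdfAt G = g1 ∨ cdfAt G = g2 := by
    rcases hG with h | h
    · exact Or.inl (by rw [h]; funext x; exact cdfAt_G1 x)
    · exact Or.inr (by rw [mem_singleton_iff] at h; rw [h]; funext x; exact cdfAt_G2 x)
  have hcompl : G (Icc (0:ℝ) 1)ᶜ = 0 := by
    rcases hG with h | h
    · rw [h, G1]
      exact pieceM_compl _ _ _ Set.Ioc_subset_Icc_self
    · rw [mem_singleton_iff] at h
      rw [h, G2, Measure.add_apply, Measure.add_apply,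
        pieceM_compl _ _ _ Set.Ioc_subset_Icc_self,
        pieceM_compl _ _ _ (fun y hy => ⟨hy.1.le, by have := hy.2; linarith⟩),
        pieceM_compl _ _ _ (fun y hy => ⟨by have := hy.1; linarith, hy.2⟩)]
      simp
  rcases this with h | h
  · exact ⟨by rw [h]; exact ramp_continuous 0 1, by rw [h]; exact g1_strict, hcompl⟩
  · refine ⟨?_, by rw [h]; exact g2_strict, hcompl⟩
    rw [h]
    exact (((ramp_continuous 0 1).const_smul (1/2 : ℝ)).add
      ((ramp_continuous 0 (1/2)).const_smul (1/2 : ℝ))).add (ramp_continuous (3/4) 1)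

lemma G1_ne_G2 : G1 ≠ G2 := by
  intro h
  have e : cdfAt G1 (3/4) = cdfAt G2 (3/4) := by rw [h]
  rw [cdfAt_G1, cdfAt_G2, g1_eval (by norm_num) (by norm_num),
    g2_eval_mid (by norm_num) le_rfl] at e
  norm_num at e

end MainProofParts

/-- **Theorem (Statement 15).** There is a prediction space in which `F` takes only two
values, both continuous strictly increasing CDFs on a shared support interval, such that
`F` is simultaneously CEP, quantile, and threshold calibrated, but not auto-calibrated. -/
theorem exists_cep_quantile_threshold_not_auto :
    ∃ (Ω : Type) (_ : MeasurableSpace Ω) (μ : Measure Ω) (hμ : IsProbabilityMeasure μ)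
      (F : Ω → Measure ℝ) (Y U : Ω → ℝ),
      IsPredictionSpace μ F Y U ∧
      (∃ G₁ G₂ : Measure ℝ, G₁ ≠ G₂ ∧ (∀ ω, F ω = G₁ ∨ F ω = G₂) ∧ CSI {G₁, G₂}) ∧
      CEPCalibrated μ F Y U ∧
      (@QuantileCalibrated Ω _ μ ⟨hμ.measure_univ ▸ ENNReal.one_lt_top⟩ F Y) ∧
      ThreshCalibrated μ F Y ∧
      ¬ AutoCalibrated μ F Y := by
  refine ⟨W, inferInstance, μP, μP_prob, Fp, Yp, Up, predSpace,
    ⟨G1, G2, G1_ne_G2, ?_, csiProof⟩, cepCal, quantCal _, threshCal, notAuto⟩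
  intro ω
  by_cases hω : ω ∈ Av
  · exact Or.inl (Fp_mem_Av hω)
  · exact Or.inr (Fp_not_mem_Av hω)


end
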